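/- arXiv:2111.03008 — 2 statements merged into one kernel-verified Lean document; each statement's English description precedes it below -/
import Mathlib

section
/- Let Γ be a fine hyperbolic graph, let Y be a connected subgraph whose vertex set is convex in the combinatorial metric on the 1-skeleton, and let v be a vertex of Γ at distance D = min{d(z,v) : z a vertex of Y} from Y. Then the set M = {z ∈ V(Y) : d(z,v) = D} of vertices of Y realizing the minimal distance is finite. -/
/-- A graph is *fine* if for every edge and every `n`, only finitely many circuits
(embedded cycles) of length at most `n` pass through that edge. -/
def SimpleGraph.IsFine {V : Type*} (Γ : SimpleGraph V) : Prop :=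
  ∀ ⦃u v : V⦄, Γ.Adj u v → ∀ n : ℕ,
    {p : Γ.Walk u u | p.IsCycle ∧ s(u, v) ∈ p.edges ∧ p.length ≤ n}.Finite

/-- Gromov hyperbolicity (four-point condition) for the combinatorial metric of a graph. -/
def SimpleGraph.IsHyperbolic {V : Type*} (Γ : SimpleGraph V) : Prop :=
  ∃ δ : ℝ, 0 ≤ δ ∧ ∀ x y z w : V,
    (Γ.dist x y + Γ.dist z w : ℝ) ≤
      max ((Γ.dist x z + Γ.dist y w : ℕ) : ℝ) ((Γ.dist x w + Γ.dist y z : ℕ) : ℝ) + δ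

namespace SimpleGraph
variable {V : Type*} {Γ : SimpleGraph V}
variable {V : Type*} {Γ : SimpleGraph V}

/-- First-hit prefix lemma: a walk containing a vertex satisfying `P` has an initial
segment ending at the *first* such vertex. -/
lemma Walk.exists_prefix_prop (P : V → Prop) :
    ∀ {u y : V} (q : Γ.Walk u y), (∃ z ∈ q.support, P z) →
    ∃ (p : V) (t : Γ.Walk u p), P p ∧ (∀ z ∈ t.support, P z → z = p) ∧
      t.support <+: q.support ∧ t.edges <+: q.edges := by
  intro u y q
  induction q with
  | nil =>
    intro h
    simp only [Walk.support_nil, List.mem_singleton] at h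
    obtain ⟨z, rfl, hz⟩ := h
    exact ⟨z, Walk.nil, hz, by simp, by simp, by simp⟩
  | @cons a b c h q ih =>
    intro hex
    by_cases hP : P a
    · refine ⟨a, Walk.nil, hP, by simp, ⟨q.support, by simp⟩, ⟨(Walk.cons h q).edges, by simp⟩⟩
    · have hex' : ∃ z ∈ q.support, P z := by
        obtain ⟨z, hz, hPz⟩ := hex
        rcases (by simpa using hz : z = a ∨ z ∈ q.support) with rfl | hz'
        · exact absurd hPz hP
        · exact ⟨z, hz', hPz⟩
      obtain ⟨p, t, h1, h2, h3, h4⟩ := ih hex'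
      refine ⟨p, Walk.cons h t, h1, ?_, ?_, ?_⟩
      · intro z hz hPz
        rcases (by simpa using hz : z = a ∨ z ∈ t.support) with rfl | hz'
        · exact absurd hPz hP
        · exact h2 z hz' hPz
      · obtain ⟨r, hr⟩ := h3
        exact ⟨r, by simp [Walk.support_cons, ← hr]⟩
      · obtain ⟨r, hr⟩ := h4
        exact ⟨r, by simp [Walk.edges_cons, ← hr]⟩


lemma firstSteps_finite (hfine : Γ.IsFine) (x y : V) (n : ℕ) :
    {w : V | ∃ (h : Γ.Adj x w) (q : Γ.Walk w y),
      (Walk.cons h q).IsPath ∧ q.length ≤ n}.Finite := by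
  rcases Set.eq_empty_or_nonempty
      {w : V | ∃ (h : Γ.Adj x w) (q : Γ.Walk w y),
        (Walk.cons h q).IsPath ∧ q.length ≤ n} with hE | ⟨w₁, h₁, q₁, hpath₁, hlen₁⟩
  · rw [hE]; exact Set.finite_empty
  have hCS : {c : Γ.Walk x x | c.IsCycle ∧ s(x, w₁) ∈ c.edges ∧ c.length ≤ 2*n+2}.Finite :=
    hfine h₁ (2*n+2)
  have hq₁ : q₁.IsPath ∧ x ∉ q₁.support := (Walk.cons_isPath_iff h₁ q₁).mp hpath₁
  apply Set.Finite.subset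
    ((hCS.biUnion (fun c _ => Set.finite_singleton (c.reverse.getVert 1))).insert w₁)
  rintro w ⟨h, q, hpath, hlen⟩
  by_cases hne : w = w₁
  · exact Set.mem_insert_iff.mpr (Or.inl hne)
  refine Set.mem_insert_iff.mpr (Or.inr ?_)
  set β : Γ.Walk x y := Walk.cons h q with hβ
  have hβpath : β.IsPath := hpath
  have hq : q.IsPath ∧ x ∉ q.support := (Walk.cons_isPath_iff h q).mp hpath
  -- first vertex of q₁ lying on β
  obtain ⟨p, t₁, hpβ, hmin, hpre_s, hpre_e⟩ :=
    Walk.exists_prefix_prop (· ∈ β.support) q₁ ⟨y, q₁.end_mem_support, β.end_mem_support⟩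
    -- initial segment of β up to (first occurrence of) p
  obtain ⟨p', T₀, hp', -, hpre_s₂, hpre_e₂⟩ :=
    Walk.exists_prefix_prop (· = p) β ⟨p, hpβ, rfl⟩
  subst hp'
  have hp_in_q₁ : p' ∈ q₁.support := hpre_s.subset t₁.end_mem_support
  have hxp : x ≠ p' := fun e => hq₁.2 (e ▸ hp_in_q₁)
  have hTsup : T₀.support ⊆ β.support := hpre_s₂.subset
  have hTnodup : T₀.support.Nodup := hpre_s₂.sublist.nodup ((Walk.isPath_def _).mp hβpath)
  have hTedges : T₀.edges ⊆ β.edges := hpre_e₂.subset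
  have ht₁nodup : t₁.support.Nodup := hpre_s.sublist.nodup ((Walk.isPath_def _).mp hq₁.1)
  have ht₁sup : t₁.support ⊆ q₁.support := hpre_s.subset
  have ht₁edges : t₁.edges ⊆ q₁.edges := hpre_e.subset
  have hTlen : T₀.length ≤ n + 1 := by
    have h5 := hpre_e₂.length_le
    rw [Walk.length_edges, Walk.length_edges] at h5
    have h6 : β.length = q.length + 1 := by rw [hβ, Walk.length_cons]
    omega
  cases T₀ with
  | nil => exact absurd rfl hxp
  | @cons _ b _ he t₂ =>
    have hbw : b = w := by
      obtain ⟨r, hr⟩ := hpre_e₂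
      rw [hβ, Walk.edges_cons, Walk.edges_cons, List.cons_append] at hr
      exact Sym2.congr_right.mp ((List.cons.injEq _ _ _ _).mp hr).1
    set T : Γ.Walk x p' := Walk.cons he t₂ with hT
    set A : Γ.Walk w₁ x := t₁.append T.reverse with hA
    have hTrnodup : T.reverse.support.Nodup := by
      rw [Walk.support_reverse]; exact List.nodup_reverse.mpr hTnodup
    have hptail : p' ∉ T.reverse.support.tail := by
      intro hmem
      have h7 := T.reverse.support_eq_cons
      rw [h7] at hTrnodup
      exact (List.nodup_cons.mp hTrnodup).1 hmem
    have hApath : A.IsPath := by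
      rw [Walk.isPath_def, hA, Walk.support_append, List.nodup_append]
      refine ⟨ht₁nodup, hTrnodup.sublist (List.tail_sublist _), ?_⟩
      intro z hz z' hz' hzz
      subst hzz
      have hzβ : z ∈ β.support := hTsup (by
        have h8 : z ∈ T.reverse.support := List.mem_of_mem_tail hz'
        rwa [Walk.support_reverse, List.mem_reverse] at h8)
      exact hptail (hmin z hz hzβ ▸ hz')
    have hAedge : s(x, w₁) ∉ A.edges := by
      rw [hA, Walk.edges_append, List.mem_append]
      rintro (hmem | hmem)
      · exact hq₁.2 (q₁.fst_mem_support_of_mem_edges (ht₁edges hmem))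
      · rw [Walk.edges_reverse, List.mem_reverse] at hmem
        have h9 := hTedges hmem
        rw [hβ, Walk.edges_cons, List.mem_cons] at h9
        rcases h9 with heq | hmem'
        · exact hne (Sym2.congr_right.mp heq).symm
        · exact hq.2 (q.fst_mem_support_of_mem_edges hmem')
    set C : Γ.Walk x x := Walk.cons h₁ A with hC
    have hCcyc : C.IsCycle := (Walk.cons_isCycle_iff A h₁).mpr ⟨hApath, hAedge⟩
    have hCedge : s(x, w₁) ∈ C.edges := by rw [hC, Walk.edges_cons]; exact List.mem_cons_self
    have ht₁len : t₁.length ≤ n := by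
      have h10 := hpre_e.length_le
      rw [Walk.length_edges, Walk.length_edges] at h10
      omega
    have hClen : C.length ≤ 2*n+2 := by
      rw [hC, Walk.length_cons, hA, Walk.length_append, Walk.length_reverse]
      omega
    have hrec : C.reverse.getVert 1 = b := by
      rw [hC, Walk.reverse_cons, hA, Walk.reverse_append, Walk.reverse_reverse, hT,
        Walk.cons_append, Walk.cons_append, Walk.getVert_cons_succ, Walk.getVert_zero]
    refine Set.mem_biUnion ⟨hCcyc, hCedge, hClen⟩ ?_
    rw [Set.mem_singleton_iff, hrec, hbw]

lemma paths_finite (hfine : Γ.IsFine) : ∀ (n : ℕ) (x y : V),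
    {p : Γ.Walk x y | p.IsPath ∧ p.length ≤ n}.Finite := by
  intro n
  induction n with
  | zero =>
    intro x y
    apply Set.Subsingleton.finite
    rintro p ⟨-, hp⟩ q ⟨-, hq⟩
    cases p with
    | nil =>
      cases q with
      | nil => rfl
      | cons => simp at hq
    | cons => simp at hp
  | succ n ih =>
    intro x y
    have hW := firstSteps_finite hfine x y n
    have hbig : ({p : Γ.Walk x y | p.IsPath ∧ p.length = 0} ∪
        ⋃ w ∈ {w : V | ∃ (h : Γ.Adj x w) (q : Γ.Walk w y),
          (Walk.cons h q).IsPath ∧ q.length ≤ n},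
          {p : Γ.Walk x y | ∃ (h : Γ.Adj x w) (q : Γ.Walk w y),
            p = Walk.cons h q ∧ q.IsPath ∧ q.length ≤ n}).Finite := by
      refine Set.Finite.union ?_ (hW.biUnion ?_)
      · apply Set.Subsingleton.finite
        rintro p ⟨-, hp⟩ q ⟨-, hq⟩
        cases p with
        | nil =>
          cases q with
          | nil => rfl
          | cons => simp at hq
        | cons => simp at hp
      · rintro w ⟨hadj, -, -, -⟩
        apply Set.Finite.subset (((ih w y).image (fun q => Walk.cons hadj q)))
        rintro p ⟨h', q, rfl, hq1, hq2⟩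
        exact ⟨q, ⟨hq1, hq2⟩, rfl⟩
    apply hbig.subset
    rintro p ⟨hp, hlen⟩
    cases p with
    | nil => exact Or.inl ⟨hp, rfl⟩
    | @cons _ b _ h' q =>
      have hmem : b ∈ {w : V | ∃ (h : Γ.Adj x w) (q : Γ.Walk w y),
          (Walk.cons h q).IsPath ∧ q.length ≤ n} := ⟨h', q, hp, by simpa using hlen⟩
      exact Or.inr (Set.mem_biUnion hmem ⟨h', q, rfl, hp.of_cons, by simpa using hlen⟩)

/-- Every vertex on a walk is within the walk's length of its endpoint. -/
lemma dist_le_of_mem_support : ∀ {a b : V} (t : Γ.Walk a b), ∀ u ∈ t.support,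
    Γ.dist u b ≤ t.length := by
  intro a b t
  induction t with
  | nil =>
    intro u hu
    simp only [Walk.support_nil, List.mem_singleton] at hu
    subst hu
    simp [dist_self]
  | @cons a c b h t ih =>
    intro u hu
    rcases (by simpa using hu : u = a ∨ u ∈ t.support) with rfl | hu'
    · exact dist_le _
    · exact (ih u hu').trans (by simp)

/-- A walk of length `≥ k` contains a vertex at distance `≤ k` from the start and
`≤ length - k` from the end. -/
lemma exists_mid (hconn : Γ.Connected) : ∀ {a b : V} (p : Γ.Walk a b) (k : ℕ), k ≤ p.length →
    ∃ m ∈ p.support, Γ.dist a m ≤ k ∧ Γ.dist m b ≤ p.length - k := by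
  intro a b p
  induction p with
  | nil =>
    intro k hk
    refine ⟨_, Walk.start_mem_support _, ?_, ?_⟩ <;> simp [dist_self]
  | @cons a c b h t ih =>
    intro k hk
    cases k with
    | zero =>
      refine ⟨a, Walk.start_mem_support _, by simp [dist_self], ?_⟩
      exact le_trans (dist_le (Walk.cons h t)) (by simp)
    | succ k =>
      obtain ⟨m, hm, h1, h2⟩ := ih k (by simpa using hk)
      refine ⟨m, by simp [hm], ?_, ?_⟩
      · calc Γ.dist a m ≤ Γ.dist a c + Γ.dist c m := hconn.dist_triangle
          _ ≤ 1 + k := by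
              have hac : Γ.dist a c ≤ 1 := by
                simpa using dist_le (Walk.cons h Walk.nil)
              omega
          _ = k + 1 := by omega
      · simpa using h2


end SimpleGraph

open SimpleGraph
/-- In a fine hyperbolic graph, if `Y` is a connected subgraph (given by a convex set of
vertices `Y`, i.e. geodesics between vertices of `Y` stay in `Y`) and `v` is a vertex at
distance `D = min {d(z,v) : z ∈ Y}` from `Y`, then the set of vertices of `Y` realizing
this minimal distance is finite. -/
theorem finitely_many_closest_points {V : Type*} (Γ : SimpleGraph V)
    (hconn : Γ.Connected) (hfine : Γ.IsFine) (hhyp : Γ.IsHyperbolic)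
    (Y : Set V) (hYconn : (Γ.induce Y).Connected)
    (hYconv : ∀ u ∈ Y, ∀ w ∈ Y, ∀ p : Γ.Walk u w, p.length = Γ.dist u w →
      ∀ x ∈ p.support, x ∈ Y)
    (v : V) (D : ℕ) (hD : IsLeast {d : ℕ | ∃ z ∈ Y, Γ.dist z v = d} D) :
    {z ∈ Y | Γ.dist z v = D}.Finite := by
  classical
  obtain ⟨δ, hδ0, hδ⟩ := hhyp
  obtain ⟨⟨z₀, hz₀Y, hz₀d⟩, hDlb⟩ := hD
  by_cases hD0 : D = 0
  · subst hD0
    apply (Set.finite_singleton v).subset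
    rintro z ⟨hzY, hzd⟩
    exact hconn.dist_eq_zero_iff.mp hzd
  have hD1 : 1 ≤ D := Nat.one_le_iff_ne_zero.mpr hD0
  set K : ℕ := 2 * ⌈δ⌉₊ + 1 with hK
  have hA : {r : Γ.Walk z₀ v | r.IsPath ∧ r.length ≤ K + D}.Finite :=
    paths_finite hfine (K + D) z₀ v
  apply Set.Finite.subset (hA.biUnion fun r _ => r.support.finite_toSet)
  rintro z ⟨hzY, hzd⟩
  -- a geodesic from z₀ to z, lying in Y
  obtain ⟨p0, hp0len⟩ := hconn.exists_walk_length_eq_dist z₀ z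
  set p : Γ.Walk z₀ z := p0.bypass with hp
  have hplen : p.length = Γ.dist z₀ z :=
    le_antisymm (hp0len ▸ p0.length_bypass_le) (dist_le _)
  have hppath : p.IsPath := p0.bypass_isPath
  have hpY : ∀ u ∈ p.support, u ∈ Y := hYconv z₀ hz₀Y z hzY p hplen
  -- the distance from z₀ to z is at most K
  set L : ℕ := Γ.dist z₀ z with hL
  have hLK : L ≤ K := by
    by_cases hL1 : L ≤ 1
    · omega
    set k : ℕ := (L + 1) / 2 with hk
    obtain ⟨m, hm_sup, hm1, hm2⟩ := exists_mid hconn p k (by rw [hplen]; omega)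
    rw [hplen] at hm2
    have hmY : m ∈ Y := hpY m hm_sup
    have hmv : D ≤ Γ.dist m v := hDlb ⟨m, hmY, rfl⟩
    have h4 := hδ z₀ z m v
    have hb1 : Γ.dist z₀ m + Γ.dist z v ≤ k + D := by
      rw [hzd]; omega
    have hb2 : Γ.dist z₀ v + Γ.dist z m ≤ k + D := by
      rw [hz₀d, dist_comm]
      omega
    have hmax : max ((Γ.dist z₀ m + Γ.dist z v : ℕ) : ℝ)
        ((Γ.dist z₀ v + Γ.dist z m : ℕ) : ℝ) ≤ ((k + D : ℕ) : ℝ) :=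
      max_le (by exact_mod_cast hb1) (by exact_mod_cast hb2)
    have hreal : (L : ℝ) + D ≤ (k + D : ℕ) + δ := by
      calc (L : ℝ) + D ≤ (Γ.dist z₀ z : ℝ) + Γ.dist m v := by
            have hc : (D : ℝ) ≤ (Γ.dist m v : ℝ) := by exact_mod_cast hmv
            have hc2 : ((Γ.dist z₀ z : ℕ) : ℝ) = (L : ℝ) := by rw [hL]
            linarith
        _ ≤ _ + δ := h4
        _ ≤ ((k + D : ℕ) : ℝ) + δ := by gcongr
    have hLkδ : ((L - k : ℕ) : ℝ) ≤ δ := by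
      have hkL : k ≤ L := by omega
      push_cast [hkL]
      push_cast at hreal
      linarith
    have : L - k ≤ ⌈δ⌉₊ := by
      exact_mod_cast hLkδ.trans (Nat.le_ceil δ)
    omega
  -- a geodesic from z to v
  obtain ⟨q0, hq0len⟩ := hconn.exists_walk_length_eq_dist z v
  set q : Γ.Walk z v := q0.bypass with hq
  have hqlen : q.length = D := by
    rw [← hzd]
    exact le_antisymm (hq0len ▸ q0.length_bypass_le) (dist_le _)
  have hqpath : q.IsPath := q0.bypass_isPath
  -- interior and far-end vertices of q are not in Y
  cases hq' : q with
  | nil => rw [hq'] at hqlen; simp at hqlen; omega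
  | @cons _ c _ he q' =>
    have hq'notY : ∀ u ∈ q'.support, u ∉ Y := by
      intro u hu huY
      have h1 : Γ.dist u v ≤ q'.length := dist_le_of_mem_support q' u hu
      have h2 : q'.length = D - 1 := by
        have := hqlen; rw [hq'] at this; simp at this; omega
      have h3 : D ≤ Γ.dist u v := hDlb ⟨u, huY, rfl⟩
      omega
    set r : Γ.Walk z₀ v := p.append (Walk.cons he q') with hr
    have hrpath : r.IsPath := by
      rw [Walk.isPath_def, hr, Walk.support_append, List.nodup_append]
      refine ⟨(Walk.isPath_def p).mp hppath, ?_, ?_⟩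
      · have : (Walk.cons he q').IsPath := hq' ▸ hqpath
        have := this.of_cons
        rw [Walk.isPath_def] at this
        simpa using this
      · intro u hu u' hu' huu
        subst huu
        rw [Walk.support_cons, List.tail_cons] at hu'
        exact hq'notY u hu' (hpY u hu)
    have hrlen : r.length ≤ K + D := by
      rw [hr, Walk.length_append]
      have : (Walk.cons he q').length = D := by rw [← hq', hqlen]
      rw [this, hplen]
      omega
    have hzr : z ∈ r.support := by
      rw [hr]
      exact Walk.subset_support_append_left _ _ p.end_mem_support
    exact Set.mem_biUnion ⟨hrpath, hrlen⟩ hzr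
end

section
/- Let a group G act acylindrically on a hyperbolic graph Γ, let H ≤ G act coboundedly on a quasi-convex subset W ⊆ Γ with quasi-isometrically embedded orbit, and let γ: ℝ → Γ be a bi-infinite geodesic converging to distinct boundary points p and q. If {gᵢW} is an infinite collection of distinct translates of W each containing an edge of γ, then only finitely many of the groups gᵢHgᵢ⁻¹ have p in their limit set, and only finitely many have q in their limit set. -/
/-- The Gromov product of `x` and `y` based at `o`, for the graph metric. -/
noncomputable def gromovProd {V : Type*} (Γ : SimpleGraph V) (o x y : V) : ℝ :=
  ((Γ.dist o x : ℝ) + (Γ.dist o y : ℝ) - (Γ.dist x y : ℝ)) / 2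

/-- Two sequences converge to the same point of the Gromov boundary: their Gromov
products go to infinity. -/
def ConvergeTogether {V : Type*} (Γ : SimpleGraph V) (o : V) (x y : ℕ → V) : Prop :=
  ∀ M : ℝ, ∃ N : ℕ, ∀ m ≥ N, ∀ n ≥ N, M ≤ gromovProd Γ o (x m) (y n)

/-- The boundary point determined by the sequence `s` lies in the limit set of the
subset `H' ⊆ G`: some orbit sequence of `H'` converges together with `s`. -/
def InLimitSet {G V : Type*} [Group G] [MulAction G V] (Γ : SimpleGraph V) (o x₀ : V)
    (H' : Set G) (s : ℕ → V) : Prop :=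
  ∃ h : ℕ → G, (∀ n, h n ∈ H') ∧ ConvergeTogether Γ o (fun n => h n • x₀) s

/-- `h` is a product of `n` elements of `S ∪ S⁻¹`. -/
def HasWordRep {G : Type*} [Group G] (S : Finset G) (h : G) (n : ℕ) : Prop :=
  ∃ l : List G, l.length = n ∧ (∀ x ∈ l, x ∈ S ∨ x⁻¹ ∈ S) ∧ l.prod = h



section aux
variable {V : Type*} {Γ : SimpleGraph V}

lemma triR (hconn : Γ.Connected) (x y z : V) :
    (Γ.dist x z : ℝ) ≤ (Γ.dist x y : ℝ) + (Γ.dist y z : ℝ) := by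
  exact_mod_cast hconn.dist_triangle

lemma distR_comm (x y : V) : (Γ.dist x y : ℝ) = (Γ.dist y x : ℝ) := by
  rw [SimpleGraph.dist_comm]

lemma gp_symm (o x y : V) : gromovProd Γ o x y = gromovProd Γ o y x := by
  unfold gromovProd; rw [SimpleGraph.dist_comm (u := x)]; ring

lemma gp_le (hconn : Γ.Connected) (o x y : V) : gromovProd Γ o x y ≤ (Γ.dist o y : ℝ) := by
  have h1 := triR hconn o y x
  unfold gromovProd
  have e := distR_comm (Γ := Γ) y x
  linarith

lemma gp_base (hconn : Γ.Connected) (o a x y : V) :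
    gromovProd Γ o x y - (Γ.dist o a : ℝ) ≤ gromovProd Γ a x y := by
  have h1 := triR hconn o a x
  have h2 := triR hconn o a y
  unfold gromovProd
  linarith

lemma gp_move (hconn : Γ.Connected) (o x y z : V) :
    gromovProd Γ o x y - (Γ.dist y z : ℝ) ≤ gromovProd Γ o x z := by
  have h1 := triR hconn o z y
  have h2 := triR hconn x y z
  unfold gromovProd
  have e := distR_comm (Γ := Γ) z y
  linarith

lemma gp_hyp {δ : ℝ}
    (hδ : ∀ x y z w : V, (Γ.dist x y + Γ.dist z w : ℝ) ≤
      max ((Γ.dist x z + Γ.dist y w : ℕ) : ℝ) ((Γ.dist x w + Γ.dist y z : ℕ) : ℝ) + δ)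
    (a x y z : V) :
    min (gromovProd Γ a x y) (gromovProd Γ a y z) - δ / 2 ≤ gromovProd Γ a x z := by
  have h := hδ x z a y
  push_cast at h
  have e1 := distR_comm (Γ := Γ) z y
  have e2 := distR_comm (Γ := Γ) z a
  have e3 := distR_comm (Γ := Γ) x a
  rcases le_total ((Γ.dist x a : ℝ) + (Γ.dist z y : ℝ)) ((Γ.dist x y : ℝ) + (Γ.dist z a : ℝ)) with hc | hc
  · rw [max_eq_right hc] at h
    calc min (gromovProd Γ a x y) (gromovProd Γ a y z) - δ / 2
        ≤ gromovProd Γ a x y - δ / 2 := by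
          have := min_le_left (gromovProd Γ a x y) (gromovProd Γ a y z); linarith
      _ ≤ gromovProd Γ a x z := by unfold gromovProd at *; linarith
  · rw [max_eq_left hc] at h
    calc min (gromovProd Γ a x y) (gromovProd Γ a y z) - δ / 2
        ≤ gromovProd Γ a y z - δ / 2 := by
          have := min_le_right (gromovProd Γ a x y) (gromovProd Γ a y z); linarith
      _ ≤ gromovProd Γ a x z := by unfold gromovProd at *; linarith

lemma dist_getVert_left (hconn : Γ.Connected) {u v : V} (p : Γ.Walk u v) :
    ∀ t : ℕ, Γ.dist u (p.getVert t) ≤ t := by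
  induction p with
  | nil => intro t; simp [SimpleGraph.Walk.getVert, SimpleGraph.dist_self]
  | @cons a b c h q ih =>
    intro t
    cases t with
    | zero => simp [SimpleGraph.Walk.getVert, SimpleGraph.dist_self]
    | succ t =>
      rw [SimpleGraph.Walk.getVert_cons_succ]
      calc Γ.dist a (q.getVert t) ≤ Γ.dist a b + Γ.dist b (q.getVert t) := hconn.dist_triangle
        _ ≤ 1 + t := by
            have h1 : Γ.dist a b ≤ 1 := le_of_eq (SimpleGraph.dist_eq_one_iff_adj.mpr h)
            exact Nat.add_le_add h1 (ih t)
        _ = t + 1 := by omega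

lemma dist_getVert_right {u v : V} (p : Γ.Walk u v) :
    ∀ t : ℕ, Γ.dist (p.getVert t) v ≤ p.length - t := by
  induction p with
  | nil => intro t; simp [SimpleGraph.Walk.getVert]
  | @cons a b c h q ih =>
    intro t
    cases t with
    | zero =>
      simpa [SimpleGraph.Walk.getVert] using SimpleGraph.dist_le (SimpleGraph.Walk.cons h q)
    | succ t =>
      rw [SimpleGraph.Walk.getVert_cons_succ]
      calc Γ.dist (q.getVert t) c ≤ q.length - t := ih t
        _ ≤ (SimpleGraph.Walk.cons h q).length - (t+1) := by
            rw [SimpleGraph.Walk.length_cons]; omega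

end aux

section act
variable {G V : Type*} [Group G] [MulAction G V] {Γ : SimpleGraph V}

/-- The graph homomorphism given by the action of `g`. -/
def actHom (hact : ∀ (g : G) (u v : V), Γ.Adj u v → Γ.Adj (g • u) (g • v)) (g : G) :
    Γ →g Γ := ⟨fun v => g • v, fun h => hact g _ _ h⟩

lemma dist_smul_act (hconn : Γ.Connected)
    (hact : ∀ (g : G) (u v : V), Γ.Adj u v → Γ.Adj (g • u) (g • v)) (g : G) (x y : V) :
    Γ.dist (g • x) (g • y) = Γ.dist x y := by
  have key : ∀ (g : G) (x y : V), Γ.dist (g • x) (g • y) ≤ Γ.dist x y := by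
    intro g x y
    obtain ⟨p, hp⟩ := hconn.exists_walk_length_eq_dist x y
    calc Γ.dist (g • x) (g • y) ≤ (p.map (actHom hact g)).length := SimpleGraph.dist_le _
      _ = Γ.dist x y := by rw [SimpleGraph.Walk.length_map, hp]
  refine le_antisymm (key g x y) ?_
  have := key g⁻¹ (g • x) (g • y)
  simpa using this

lemma mem_smul_img {g : G} {W : Set V} {x : V} :
    x ∈ (fun y => g • y) '' W ↔ g⁻¹ • x ∈ W := by
  constructor
  · rintro ⟨w, hw, rfl⟩; simpa using hw
  · intro h; exact ⟨g⁻¹ • x, h, by simp⟩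

end act


section tail
variable {G V : Type*} [Group G] [MulAction G V] {Γ : SimpleGraph V}

lemma tail_near (hconn : Γ.Connected) {δ : ℝ} (hδ0 : 0 ≤ δ)
    (hδ : ∀ x y z w : V, (Γ.dist x y + Γ.dist z w : ℝ) ≤
      max ((Γ.dist x z + Γ.dist y w : ℕ) : ℝ) ((Γ.dist x w + Γ.dist y z : ℕ) : ℝ) + δ)
    (hact : ∀ (g : G) (u v : V), Γ.Adj u v → Γ.Adj (g • u) (g • v))
    (H : Subgroup G) (W : Set V) (x₀ : V) (hx₀ : x₀ ∈ W)
    (hWinv : ∀ h ∈ H, ∀ x ∈ W, h • x ∈ W)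
    {κ : ℕ} (hκ : ∀ u ∈ W, ∀ w ∈ W, ∀ p : Γ.Walk u w, p.length = Γ.dist u w →
      ∀ x ∈ p.support, ∃ y ∈ W, Γ.dist x y ≤ κ)
    (γ : ℤ → V) (hγ : ∀ m n : ℤ, Γ.dist (γ m) (γ n) = (m - n).natAbs)
    (o : V) (g : G)
    (hedgeg : ∃ n : ℤ, γ n ∈ (fun x => g • x) '' W)
    (hlim : InLimitSet Γ o x₀ ((fun x => g * x * g⁻¹) '' (H : Set G)) (fun n => γ (n : ℤ))) :
    ∃ m₀ : ℤ, ∀ n : ℤ, m₀ ≤ n → ∃ w ∈ W, (Γ.dist (γ n) (g • w) : ℝ) ≤ κ + 2 * δ := by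
  obtain ⟨m₀, w₀, hw₀, ha⟩ := hedgeg
  obtain ⟨hs, hmem, hconv⟩ := hlim
  have hmem' : ∀ k : ℕ, ∃ h' ∈ (H : Set G), g * h' * g⁻¹ = hs k := fun k => hmem k
  choose h' hh' heq using hmem'
  refine ⟨m₀, fun n hn => ?_⟩
  set a := γ m₀ with ha'
  -- parameters
  set t : ℕ := (n - m₀).toNat with ht
  have htz : (t : ℤ) = n - m₀ := Int.toNat_of_nonneg (by omega)
  obtain ⟨N₀, hN₀⟩ := hconv ((t : ℝ) + (Γ.dist o a : ℝ) + (Γ.dist (g⁻¹ • x₀) x₀ : ℝ))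
  set m : ℕ := max N₀ n.toNat with hm
  have hmn : n ≤ (m : ℤ) := le_trans (Int.self_le_toNat n) (by exact_mod_cast Nat.le_max_right N₀ n.toNat)
  have hgp0 := hN₀ N₀ le_rfl m (Nat.le_max_left _ _)
  set z := g • (h' N₀ • x₀) with hz
  have hzW : h' N₀ • x₀ ∈ W := hWinv _ (hh' N₀) _ hx₀
  -- distance between orbit point and z is the constant K
  have hdzy : Γ.dist z (hs N₀ • x₀) = Γ.dist (g⁻¹ • x₀) x₀ := by
    rw [← heq N₀, hz]
    have e : (g * h' N₀ * g⁻¹) • x₀ = g • (h' N₀ • (g⁻¹ • x₀)) := by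
      rw [mul_smul, mul_smul]
    rw [e, dist_smul_act hconn hact, dist_smul_act hconn hact, SimpleGraph.dist_comm]
  -- Gromov product of γ m and z at base a is at least t
  have hgpz : (t : ℝ) ≤ gromovProd Γ a (γ (m : ℤ)) z := by
    have b1 := gp_base hconn o a (γ (m : ℤ)) z
    have b2 := gp_move hconn o (γ (m : ℤ)) (hs N₀ • x₀) z
    have b3 : gromovProd Γ o (γ (m : ℤ)) (hs N₀ • x₀) = gromovProd Γ o (hs N₀ • x₀) (γ (m : ℤ)) :=
      gp_symm o _ _
    have e : (Γ.dist (hs N₀ • x₀) z : ℝ) = (Γ.dist (g⁻¹ • x₀) x₀ : ℝ) := by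
      rw [SimpleGraph.dist_comm, hdzy]
    linarith [hgp0]
  have htaz : t ≤ Γ.dist a z := by
    have := gp_le hconn a (γ (m : ℤ)) z
    exact_mod_cast le_trans hgpz this
  -- geodesic from a to z
  obtain ⟨p, hp⟩ := hconn.exists_walk_length_eq_dist a z
  set v := p.getVert t with hv
  have htL : t ≤ p.length := by omega
  have h1 : Γ.dist a v ≤ t := dist_getVert_left hconn p t
  have h2 : Γ.dist v z ≤ p.length - t := dist_getVert_right p t
  have h3 : Γ.dist a z ≤ Γ.dist a v + Γ.dist v z := hconn.dist_triangle
  have e1 : Γ.dist a v = t := by omega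
  have e2 : Γ.dist v z = Γ.dist a z - t := by omega
  -- distances along γ
  have d1 : Γ.dist a (γ n) = t := by rw [ha', hγ]; omega
  have d2 : Γ.dist a (γ (m : ℤ)) = t + (m - n).toNat := by rw [ha', hγ]; omega
  have d3 : Γ.dist (γ n) (γ (m : ℤ)) = (m - n).toNat := by rw [hγ]; omega
  -- gromov products
  have gpb : gromovProd Γ a (γ n) (γ (m : ℤ)) = t := by
    unfold gromovProd; rw [d1, d2, d3]; push_cast; ring
  have gpv : gromovProd Γ a z v = t := by
    unfold gromovProd
    rw [e1, SimpleGraph.dist_comm (u := z), e2]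
    rw [Nat.cast_sub htaz]
    push_cast; ring
  have c1 := gp_hyp hδ a (γ n) (γ (m : ℤ)) z
  have c2 := gp_hyp hδ a (γ n) z v
  have hc1 : (t : ℝ) - δ / 2 ≤ gromovProd Γ a (γ n) z := by
    rcases min_le_iff.mp (le_refl (min (gromovProd Γ a (γ n) (γ (m:ℤ))) (gromovProd Γ a (γ (m:ℤ)) z))) with _ | _
    all_goals
      have hmin : (t : ℝ) ≤ min (gromovProd Γ a (γ n) (γ (m:ℤ))) (gromovProd Γ a (γ (m:ℤ)) z) :=
        le_min (le_of_eq gpb.symm) hgpz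
      linarith
  have hc2 : (t : ℝ) - δ ≤ gromovProd Γ a (γ n) v := by
    have hmin : (t : ℝ) - δ / 2 ≤ min (gromovProd Γ a (γ n) z) (gromovProd Γ a z v) := by
      refine le_min hc1 ?_
      rw [gpv]; linarith
    linarith
  have hdxv : (Γ.dist (γ n) v : ℝ) ≤ 2 * δ := by
    have : gromovProd Γ a (γ n) v =
        ((Γ.dist a (γ n) : ℝ) + (Γ.dist a v : ℝ) - (Γ.dist (γ n) v : ℝ)) / 2 := rfl
    rw [d1, e1] at this
    rw [this] at hc2
    push_cast at hc2 ⊢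
    linarith
  -- quasiconvexity: v is close to g • W
  have hav : g⁻¹ • a = w₀ := by rw [← ha]; simp
  have hzv : g⁻¹ • z = h' N₀ • x₀ := by rw [hz]; simp
  set q : Γ.Walk w₀ (h' N₀ • x₀) := (p.map (actHom hact g⁻¹)).copy (@id ((actHom hact g⁻¹) a = w₀) hav)
    (@id ((actHom hact g⁻¹) z = h' N₀ • x₀) hzv) with hq
  have hqlen : q.length = Γ.dist w₀ (h' N₀ • x₀) := by
    rw [hq, SimpleGraph.Walk.length_copy, SimpleGraph.Walk.length_map, hp]
    rw [← hav, ← hzv, dist_smul_act hconn hact]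
  have hvsup : g⁻¹ • v ∈ q.support := by
    rw [hq, SimpleGraph.Walk.support_copy, SimpleGraph.Walk.support_map]
    have : v ∈ p.support :=
      SimpleGraph.Walk.mem_support_iff_exists_getVert.mpr ⟨t, rfl, htL⟩
    exact List.mem_map.mpr ⟨v, this, rfl⟩
  obtain ⟨y', hy'W, hy'⟩ := hκ w₀ hw₀ _ hzW q hqlen _ hvsup
  refine ⟨y', hy'W, ?_⟩
  have hvy : Γ.dist v (g • y') = Γ.dist (g⁻¹ • v) y' := by
    rw [← dist_smul_act hconn hact g⁻¹]; simp
  have tri : (Γ.dist (γ n) (g • y') : ℝ) ≤ (Γ.dist (γ n) v : ℝ) + (Γ.dist v (g • y') : ℝ) :=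
    triR hconn _ _ _
  have : (Γ.dist v (g • y') : ℝ) ≤ κ := by rw [hvy]; exact_mod_cast hy'
  linarith

end tail

section key
variable {G V : Type*} [Group G] [MulAction G V] {Γ : SimpleGraph V}

lemma key_finite (hconn : Γ.Connected)
    (hhyp : ∃ δ : ℝ, 0 ≤ δ ∧ ∀ x y z w : V,
      (Γ.dist x y + Γ.dist z w : ℝ) ≤
        max ((Γ.dist x z + Γ.dist y w : ℕ) : ℝ) ((Γ.dist x w + Γ.dist y z : ℕ) : ℝ) + δ)
    (hact : ∀ (g : G) (u v : V), Γ.Adj u v → Γ.Adj (g • u) (g • v))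
    (H : Subgroup G) (W : Set V) (x₀ : V) (hx₀ : x₀ ∈ W)
    (hWinv : ∀ h ∈ H, ∀ x ∈ W, h • x ∈ W)
    (hWqc : ∃ κ : ℕ, ∀ u ∈ W, ∀ w ∈ W, ∀ p : Γ.Walk u w, p.length = Γ.dist u w →
      ∀ x ∈ p.support, ∃ y ∈ W, Γ.dist x y ≤ κ)
    (hacyl : ∀ ε : ℕ, ∃ D N : ℕ, ∀ s : Finset G,
      (∀ g₁ ∈ s, ∀ g₂ ∈ s, g₁ ≠ g₂ → g₁⁻¹ * g₂ ∉ H) →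
      (∃ x y : V, (∀ g ∈ s, ∃ w ∈ W, Γ.dist x (g • w) ≤ ε) ∧
        (∀ g ∈ s, ∃ w ∈ W, Γ.dist y (g • w) ≤ ε) ∧ D < Γ.dist x y) →
      s.card ≤ N)
    (γ : ℤ → V) (hγ : ∀ m n : ℤ, Γ.dist (γ m) (γ n) = (m - n).natAbs)
    (o : V) (gseq : ℕ → G)
    (hdist : ∀ i j : ℕ, i ≠ j →
      (fun x => gseq i • x) '' W ≠ (fun x => gseq j • x) '' W)
    (hedge : ∀ i : ℕ, ∃ n : ℤ, γ n ∈ (fun x => gseq i • x) '' W) :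
    {i : ℕ | InLimitSet Γ o x₀ ((fun x => gseq i * x * (gseq i)⁻¹) '' (H : Set G))
      (fun n => γ (n : ℤ))}.Finite := by
  classical
  obtain ⟨δ, hδ0, hδ⟩ := hhyp
  obtain ⟨κ, hκ⟩ := hWqc
  set ε : ℕ := κ + ⌈2 * δ⌉₊ with hε
  obtain ⟨D, N, hDN⟩ := hacyl ε
  by_contra hinf
  rw [← Set.not_infinite, not_not] at hinf
  obtain ⟨t, hts, htcard⟩ := hinf.exists_subset_card_eq (N + 1)
  -- distinct cosets
  have hdisj : ∀ i j : ℕ, i ≠ j → (gseq i)⁻¹ * gseq j ∉ H := by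
    intro i j hij hmem
    refine hdist i j hij ?_
    ext x
    rw [mem_smul_img, mem_smul_img]
    have e : (gseq j)⁻¹ • x = ((gseq i)⁻¹ * gseq j)⁻¹ • ((gseq i)⁻¹ • x) := by
      rw [← mul_smul]; congr 1; group
    constructor
    · intro hx
      rw [e]
      exact hWinv _ (inv_mem hmem) _ hx
    · intro hx
      have : (gseq i)⁻¹ • x = ((gseq i)⁻¹ * gseq j) • ((gseq j)⁻¹ • x) := by
        rw [← mul_smul]; congr 1; group
      rw [this]
      exact hWinv _ hmem _ hx
  -- tails
  have tail : ∀ i : ℕ, ∃ m₀ : ℤ, i ∈ t →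
      ∀ n : ℤ, m₀ ≤ n → ∃ w ∈ W, (Γ.dist (γ n) (gseq i • w) : ℝ) ≤ κ + 2 * δ := by
    intro i
    by_cases hi : i ∈ t
    · have hlim : InLimitSet Γ o x₀ ((fun x => gseq i * x * (gseq i)⁻¹) '' (H : Set G))
          (fun n => γ (n : ℤ)) := hts hi
      obtain ⟨m₀, hm₀⟩ := tail_near hconn hδ0 hδ hact H W x₀ hx₀ hWinv hκ γ hγ o
        (gseq i) (hedge i) hlim
      exact ⟨m₀, fun _ => hm₀⟩
    · exact ⟨0, fun h => absurd h hi⟩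
  choose m₀ hm₀ using tail
  have hne : t.Nonempty := by
    rw [← Finset.card_pos, htcard]; omega
  set M : ℤ := t.sup' hne m₀ with hM
  set s : Finset G := t.image gseq with hsdef
  have hinj : Set.InjOn gseq t := by
    intro i hi j hj hgij
    by_contra hij
    exact hdist i j hij (by rw [hgij])
  have hcard : s.card = N + 1 := by
    rw [hsdef, Finset.card_image_of_injOn hinj, htcard]
  -- bound from real estimate to ℕ
  have hbound : ∀ i ∈ t, ∀ n : ℤ, m₀ i ≤ n → ∃ w ∈ W, Γ.dist (γ n) (gseq i • w) ≤ ε := by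
    intro i hi n hn
    obtain ⟨w, hw, hwle⟩ := hm₀ i hi n hn
    refine ⟨w, hw, ?_⟩
    have h2 : (2 * δ : ℝ) ≤ (⌈2 * δ⌉₊ : ℕ) := Nat.le_ceil _
    have : (Γ.dist (γ n) (gseq i • w) : ℝ) ≤ (ε : ℕ) := by
      rw [hε]; push_cast; linarith
    exact_mod_cast this
  have hsep : ∀ g₁ ∈ s, ∀ g₂ ∈ s, g₁ ≠ g₂ → g₁⁻¹ * g₂ ∉ H := by
    intro g₁ hg₁ g₂ hg₂ hne'
    obtain ⟨i, hi, rfl⟩ := Finset.mem_image.mp hg₁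
    obtain ⟨j, hj, rfl⟩ := Finset.mem_image.mp hg₂
    exact hdisj i j (fun h => hne' (by rw [h]))
  have hle : s.card ≤ N := by
    refine hDN s hsep ⟨γ M, γ (M + (D + 1)), ?_, ?_, ?_⟩
    · intro g hg
      obtain ⟨i, hi, rfl⟩ := Finset.mem_image.mp hg
      exact hbound i hi M (Finset.le_sup' m₀ hi)
    · intro g hg
      obtain ⟨i, hi, rfl⟩ := Finset.mem_image.mp hg
      exact hbound i hi (M + (D + 1)) (le_trans (Finset.le_sup' m₀ hi) (by omega))
    · rw [hγ]; omega
  omega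

end key

/-- **Acylindricity bounds limit sets of skewering translates.** Let `G` act
acylindrically along `H` (in the sense of Abbott–Manning) on a hyperbolic graph `Γ`,
where `H ≤ G` acts coboundedly on a quasi-convex subset `W` with quasi-isometrically
embedded orbit.  Let `γ : ℤ → Γ` be a bi-infinite geodesic converging to distinct
boundary points `p = γ(+∞)` and `q = γ(-∞)`.  If `(gᵢ • W)` is an infinite collection
of distinct translates of `W`, each containing an edge of `γ`, then only finitely many
of the conjugates `gᵢHgᵢ⁻¹` have `p` in their limit set, and only finitely many have
`q` in their limit set. -/
theorem finitely_many_translates_with_limit_point {G V : Type*} [Group G] [MulAction G V]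
    (Γ : SimpleGraph V) (hconn : Γ.Connected) (hhyp : Γ.IsHyperbolic)
    (hact : ∀ (g : G) (u v : V), Γ.Adj u v → Γ.Adj (g • u) (g • v))
    (H : Subgroup G) (W : Set V) (x₀ : V) (hx₀ : x₀ ∈ W)
    (hWinv : ∀ h ∈ H, ∀ x ∈ W, h • x ∈ W)
    (hWcobdd : ∃ C : ℕ, ∀ x ∈ W, ∃ h ∈ H, Γ.dist x (h • x₀) ≤ C)
    (hWqc : ∃ κ : ℕ, ∀ u ∈ W, ∀ w ∈ W, ∀ p : Γ.Walk u w, p.length = Γ.dist u w →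
      ∀ x ∈ p.support, ∃ y ∈ W, Γ.dist x y ≤ κ)
    (hqie : ∃ S : Finset G, (↑S : Set G) ⊆ (H : Set G) ∧
      Subgroup.closure (↑S : Set G) = H ∧ ∃ a b : ℝ, 0 < a ∧ 0 ≤ b ∧
        (∀ h ∈ H, ∀ n : ℕ, HasWordRep S h n → (Γ.dist x₀ (h • x₀) : ℝ) ≤ a * n + b) ∧
        (∀ h ∈ H, ∃ n : ℕ, HasWordRep S h n ∧ (n : ℝ) ≤ a * (Γ.dist x₀ (h • x₀)) + b))
    (hacyl : ∀ ε : ℕ, ∃ D N : ℕ, ∀ s : Finset G,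
      (∀ g₁ ∈ s, ∀ g₂ ∈ s, g₁ ≠ g₂ → g₁⁻¹ * g₂ ∉ H) →
      (∃ x y : V, (∀ g ∈ s, ∃ w ∈ W, Γ.dist x (g • w) ≤ ε) ∧
        (∀ g ∈ s, ∃ w ∈ W, Γ.dist y (g • w) ≤ ε) ∧ D < Γ.dist x y) →
      s.card ≤ N)
    (γ : ℤ → V) (hγ : ∀ m n : ℤ, Γ.dist (γ m) (γ n) = (m - n).natAbs)
    (o : V)
    (hpq : ¬ ConvergeTogether Γ o (fun n => γ n) (fun n => γ (-(n : ℤ))))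
    (gseq : ℕ → G)
    (hdist : ∀ i j : ℕ, i ≠ j →
      (fun x => gseq i • x) '' W ≠ (fun x => gseq j • x) '' W)
    (hedge : ∀ i : ℕ, ∃ n : ℤ, γ n ∈ (fun x => gseq i • x) '' W ∧
      γ (n + 1) ∈ (fun x => gseq i • x) '' W) :
    {i : ℕ | InLimitSet Γ o x₀ ((fun x => gseq i * x * (gseq i)⁻¹) '' (H : Set G))
      (fun n => γ n)}.Finite ∧
    {i : ℕ | InLimitSet Γ o x₀ ((fun x => gseq i * x * (gseq i)⁻¹) '' (H : Set G))
      (fun n => γ (-(n : ℤ)))}.Finite := by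
  constructor
  · exact key_finite hconn hhyp hact H W x₀ hx₀ hWinv hWqc hacyl γ hγ o gseq hdist
      (fun i => (hedge i).imp fun n h => h.1)
  · refine key_finite hconn hhyp hact H W x₀ hx₀ hWinv hWqc hacyl (fun m => γ (-m))
      (fun m n => by rw [hγ]; omega) o gseq hdist (fun i => ?_)
    obtain ⟨n, h1, -⟩ := hedge i
    refine ⟨-n, ?_⟩
    show γ (-(-n)) ∈ _
    rw [neg_neg]
    exact h1
end
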